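/- The ℂ-algebra homomorphism φ : ℂ[[x,y]] → ℂ[[t]] given by the substitution x ↦ t², y ↦ t³ has kernel equal to the principal ideal (y² − x³) of ℂ[[x,y]], and its image equals the subalgebra ℂ[[t²,t³]] of ℂ[[t]] consisting of all power series whose coefficient of t vanishes. Consequently φ induces a ℂ-algebra isomorphism ℂ[[x,y]]/(y² − x³) ≅ ℂ[[t²,t³]]. -/

import Mathlib

set_option synthInstance.maxHeartbeats 1000000
set_option maxHeartbeats 1000000

/-- The subalgebra `ℂ[[t²,t³]]` of `ℂ[[t]]`: power series whose coefficient of `t` vanishes. -/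
noncomputable def cuspAlgebra : Subalgebra ℂ (PowerSeries ℂ) where
  carrier := {f | PowerSeries.coeff 1 f = 0}
  add_mem' := by
    intro a b ha hb
    simp only [Set.mem_setOf_eq, map_add] at *
    rw [ha, hb, add_zero]
  mul_mem' := by
    intro a b ha hb
    simp only [Set.mem_setOf_eq] at *
    rw [PowerSeries.coeff_mul, Finset.Nat.sum_antidiagonal_eq_sum_range_succ_mk]
    simp [Finset.sum_range_succ, ha, hb]
  one_mem' := by simp [Set.mem_setOf_eq, PowerSeries.coeff_one]
  algebraMap_mem' := by
    intro c
    simp [Set.mem_setOf_eq, PowerSeries.algebraMap_apply, PowerSeries.coeff_C]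

namespace CuspProof
noncomputable section
open Finsupp

def pr (a b : ℕ) : Fin 2 →₀ ℕ := Finsupp.single 0 a + Finsupp.single 1 b
lemma pr0 (a b : ℕ) : pr a b 0 = a := by simp [pr, Finsupp.single_apply]
lemma pr1 (a b : ℕ) : pr a b 1 = b := by simp [pr, Finsupp.single_apply]
lemma pr_eq (d : Fin 2 →₀ ℕ) : d = pr (d 0) (d 1) := by
  ext x; fin_cases x <;> simp [pr, Finsupp.single_apply]

def c (F : MvPowerSeries (Fin 2) ℂ) (a b : ℕ) : ℂ := MvPowerSeries.coeff (pr a b) F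

lemma c_def (F : MvPowerSeries (Fin 2) ℂ) (a b : ℕ) :
    MvPowerSeries.coeff (Finsupp.single 0 a + Finsupp.single 1 b) F = c F a b := rfl

lemma c_congr (F : MvPowerSeries (Fin 2) ℂ) {x x' y y' : ℕ} (hx : x = x') (hy : y = y') :
    c F x y = c F x' y' := by rw [hx, hy]

def g : MvPowerSeries (Fin 2) ℂ := (MvPowerSeries.X 1) ^ 2 - (MvPowerSeries.X 0) ^ 3

lemma coeff_g (a b : ℕ) :
    c g a b = (if (a, b) = (0, 2) then 1 else 0) - (if (a, b) = (3, 0) then 1 else 0) := by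
  have h1 : Finsupp.single (1 : Fin 2) 2 = pr 0 2 := by simp [pr]
  have h0 : Finsupp.single (0 : Fin 2) 3 = pr 3 0 := by simp [pr]
  have hinj : ∀ a b a' b' : ℕ, (pr a b = pr a' b') ↔ (a = a' ∧ b = b') := by
    intro a b a' b'
    constructor
    · intro h; exact ⟨by rw [← pr0 a b, h, pr0], by rw [← pr1 a b, h, pr1]⟩
    · rintro ⟨rfl, rfl⟩; rfl
  simp only [c, g, map_sub, MvPowerSeries.coeff_X_pow, h1, h0, hinj, Prod.mk.injEq]

def Q (F : MvPowerSeries (Fin 2) ℂ) : MvPowerSeries (Fin 2) ℂ :=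
  fun d => ∑ k ∈ Finset.range (d 0 / 3 + 1), c F (d 0 - 3*k) (d 1 + 2*k + 2)

lemma coeff_Q (F : MvPowerSeries (Fin 2) ℂ) (a b : ℕ) :
    MvPowerSeries.coeff (pr a b) (Q F) =
      ∑ k ∈ Finset.range (a / 3 + 1), c F (a - 3*k) (b + 2*k + 2) := by
  rw [MvPowerSeries.coeff_apply]
  show ∑ k ∈ Finset.range ((pr a b) 0 / 3 + 1), c F ((pr a b) 0 - 3*k) ((pr a b) 1 + 2*k + 2) = _
  rw [pr0, pr1]

lemma coeff_mul_g (F : MvPowerSeries (Fin 2) ℂ) (a b : ℕ) :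
    MvPowerSeries.coeff (pr a b) (Q F * g) =
      (if 2 ≤ b then ∑ k ∈ Finset.range (a / 3 + 1), c F (a - 3*k) ((b-2) + 2*k + 2) else 0)
      - (if 3 ≤ a then ∑ k ∈ Finset.range ((a-3) / 3 + 1), c F ((a-3) - 3*k) (b + 2*k + 2) else 0) := by
  have h1 : ((MvPowerSeries.X 1 : MvPowerSeries (Fin 2) ℂ)) ^ 2
      = MvPowerSeries.monomial (Finsupp.single 1 2) 1 := MvPowerSeries.X_pow_eq 1 2
  have h0 : ((MvPowerSeries.X 0 : MvPowerSeries (Fin 2) ℂ)) ^ 3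
      = MvPowerSeries.monomial (Finsupp.single 0 3) 1 := MvPowerSeries.X_pow_eq 0 3
  have hle1 : Finsupp.single (1:Fin 2) 2 ≤ pr a b ↔ 2 ≤ b := by
    rw [Finsupp.single_le_iff]; rw [pr1]
  have hle0 : Finsupp.single (0:Fin 2) 3 ≤ pr a b ↔ 3 ≤ a := by
    rw [Finsupp.single_le_iff]; rw [pr0]
  have hsub1 : pr a b - Finsupp.single (1:Fin 2) 2 = pr a (b - 2) := by
    ext x; fin_cases x <;> simp [pr, Finsupp.single_apply]
  have hsub0 : pr a b - Finsupp.single (0:Fin 2) 3 = pr (a - 3) b := by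
    ext x; fin_cases x <;> simp [pr, Finsupp.single_apply]
  rw [show g = MvPowerSeries.monomial (Finsupp.single 1 2) 1
        - MvPowerSeries.monomial (Finsupp.single 0 3) 1 by rw [g, h1, h0],
      mul_sub, map_sub, MvPowerSeries.coeff_mul_monomial, MvPowerSeries.coeff_mul_monomial]
  rw [hsub1, hsub0]
  by_cases hb : 2 ≤ b <;> by_cases ha : 3 ≤ a <;>
    simp [hle1, hle0, hb, ha, coeff_Q, mul_one]

lemma chain_sum (c : ℕ → ℕ → ℂ) (n i j : ℕ) (hj : j ≤ 1) (hn : 2*i + 3*j = n) :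
    ∑ p ∈ (Finset.range (n + 1) ×ˢ Finset.range (n + 1)).filter
        (fun p => 2 * p.1 + 3 * p.2 = n), c p.1 p.2
    = ∑ k ∈ Finset.range (i/3 + 1), c (i - 3*k) (j + 2*k) := by
  apply Finset.sum_nbij' (i := fun p => (p.2 - j)/2) (j := fun k => (i - 3*k, j + 2*k))
  · intro p hp
    simp only [Finset.mem_filter, Finset.mem_product, Finset.mem_range] at hp ⊢
    omega
  · intro k hk
    simp only [Finset.mem_filter, Finset.mem_product, Finset.mem_range] at hk ⊢
    omega
  · intro p hp
    simp only [Finset.mem_filter, Finset.mem_product, Finset.mem_range] at hp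
    ext <;> simp <;> omega
  · intro k hk
    simp only [Finset.mem_range] at hk
    simp only []; omega
  · intro p hp
    simp only [Finset.mem_filter, Finset.mem_product, Finset.mem_range] at hp
    congr 1 <;> omega

lemma Q_mul_g (F : MvPowerSeries (Fin 2) ℂ)
    (hF : ∀ i j : ℕ, j ≤ 1 →
      ∑ k ∈ Finset.range (i/3 + 1), c F (i - 3*k) (j + 2*k) = 0) :
    Q F * g = F := by
  apply MvPowerSeries.ext
  intro d
  rw [pr_eq d]
  set a := d 0; set b := d 1
  show MvPowerSeries.coeff (pr a b) (Q F * g) = c F a b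
  rw [coeff_mul_g]
  by_cases hb : 2 ≤ b <;> by_cases ha : 3 ≤ a
  · rw [if_pos hb, if_pos ha, Finset.sum_range_succ']
    have e1 : ∀ k ∈ Finset.range (a/3), c F (a - 3*(k+1)) ((b-2) + 2*(k+1) + 2)
        = c F ((a-3) - 3*k) (b + 2*k + 2) := fun k _ => c_congr F (by omega) (by omega)
    rw [Finset.sum_congr rfl e1, show (a:ℕ)/3 = (a-3)/3 + 1 by omega,
        c_congr F (show a - 3*0 = a by omega) (show (b-2) + 2*0 + 2 = b by omega)]
    ring
  · rw [if_pos hb, if_neg ha, show a/3 = 0 by omega, Finset.sum_range_one,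
        c_congr F (show a - 3*0 = a by omega) (show (b-2) + 2*0 + 2 = b by omega)]
    ring
  · rw [if_neg hb, if_pos ha]
    have h := hF a b (by omega)
    rw [Finset.sum_range_succ'] at h
    have e1 : ∀ k ∈ Finset.range (a/3), c F (a - 3*(k+1)) (b + 2*(k+1))
        = c F ((a-3) - 3*k) (b + 2*k + 2) := fun k _ => c_congr F (by omega) (by omega)
    rw [Finset.sum_congr rfl e1, show (a:ℕ)/3 = (a-3)/3 + 1 by omega,
        c_congr F (show a - 3*0 = a by omega) (show b + 2*0 = b by omega)] at h
    linear_combination -h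
  · rw [if_neg hb, if_neg ha]
    have h := hF a b (by omega)
    rw [show a/3 = 0 by omega, Finset.sum_range_one,
        c_congr F (show a - 3*0 = a by omega) (show b + 2*0 = b by omega)] at h
    rw [h]; ring

/-- preimage of a power series with vanishing `t`-coefficient -/
def lift (f : PowerSeries ℂ) : MvPowerSeries (Fin 2) ℂ :=
  fun d => if d 1 = 0 then PowerSeries.coeff (2 * d 0) f
    else if d 1 = 1 then PowerSeries.coeff (2 * d 0 + 3) f else 0

lemma c_lift (f : PowerSeries ℂ) (a b : ℕ) :
    c (lift f) a b = if b = 0 then PowerSeries.coeff (2 * a) f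
      else if b = 1 then PowerSeries.coeff (2 * a + 3) f else 0 := by
  rw [c, MvPowerSeries.coeff_apply]
  show (if (pr a b) 1 = 0 then PowerSeries.coeff (2 * (pr a b) 0) f
    else if (pr a b) 1 = 1 then PowerSeries.coeff (2 * (pr a b) 0 + 3) f else 0) = _
  rw [pr0, pr1]

end
end CuspProof

open CuspProof in
/-- The `ℂ`-algebra homomorphism `φ : ℂ[[x,y]] → ℂ[[t]]` given by the
substitution `x ↦ t², y ↦ t³` (i.e. sending `Σ a_{ij} x^i y^j` to `Σ a_{ij} t^{2i+3j}`,
which is the stated coefficient formula below) has kernel equal to the principal ideal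
`(y² − x³)`, and its image equals the subalgebra `ℂ[[t²,t³]]` of power series whose
coefficient of `t` vanishes.  Consequently `φ` induces a `ℂ`-algebra isomorphism
`ℂ[[x,y]]/(y² − x³) ≅ ℂ[[t²,t³]]`. -/
theorem substitution_ker_eq_span_and_range_eq_cuspAlgebra
    (φ : MvPowerSeries (Fin 2) ℂ →ₐ[ℂ] PowerSeries ℂ)
    (hφ : ∀ (F : MvPowerSeries (Fin 2) ℂ) (n : ℕ),
      PowerSeries.coeff n (φ F) =
        ∑ p ∈ (Finset.range (n + 1) ×ˢ Finset.range (n + 1)).filter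
            (fun p => 2 * p.1 + 3 * p.2 = n),
          MvPowerSeries.coeff (Finsupp.single 0 p.1 + Finsupp.single 1 p.2) F) :
    RingHom.ker φ.toRingHom =
        Ideal.span {(MvPowerSeries.X 1 : MvPowerSeries (Fin 2) ℂ) ^ 2 -
          (MvPowerSeries.X 0) ^ 3} ∧
      φ.range = cuspAlgebra ∧
      Nonempty ((MvPowerSeries (Fin 2) ℂ ⧸
          Ideal.span {(MvPowerSeries.X 1 : MvPowerSeries (Fin 2) ℂ) ^ 2 -
            (MvPowerSeries.X 0) ^ 3}) ≃ₐ[ℂ] cuspAlgebra) := by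
  have hφ' : ∀ (F : MvPowerSeries (Fin 2) ℂ) (n : ℕ),
      PowerSeries.coeff n (φ F) =
        ∑ p ∈ (Finset.range (n + 1) ×ˢ Finset.range (n + 1)).filter
            (fun p => 2 * p.1 + 3 * p.2 = n), c F p.1 p.2 := by
    intro F n; rw [hφ]; exact Finset.sum_congr rfl fun p _ => c_def F p.1 p.2
  -- φ g = 0
  have hg : φ g = 0 := by
    ext n
    rw [hφ' g n, map_zero]
    have : ∀ p ∈ (Finset.range (n + 1) ×ˢ Finset.range (n + 1)).filter
        (fun p : ℕ × ℕ => 2 * p.1 + 3 * p.2 = n), c g p.1 p.2 =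
        ((if p = ((0:ℕ), (2:ℕ)) then (1:ℂ) else 0) - (if p = (3, 0) then 1 else 0)) := by
      intro p _; rw [coeff_g]
    rw [Finset.sum_congr rfl this, Finset.sum_sub_distrib,
        Finset.sum_ite_eq' _ ((0:ℕ), (2:ℕ)), Finset.sum_ite_eq' _ ((3:ℕ), (0:ℕ))]
    have m1 : (((0:ℕ), (2:ℕ)) ∈ (Finset.range (n + 1) ×ˢ Finset.range (n + 1)).filter
        (fun p : ℕ × ℕ => 2 * p.1 + 3 * p.2 = n)) ↔ n = 6 := by
      simp only [Finset.mem_filter, Finset.mem_product, Finset.mem_range]; omega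
    have m2 : (((3:ℕ), (0:ℕ)) ∈ (Finset.range (n + 1) ×ˢ Finset.range (n + 1)).filter
        (fun p : ℕ × ℕ => 2 * p.1 + 3 * p.2 = n)) ↔ n = 6 := by
      simp only [Finset.mem_filter, Finset.mem_product, Finset.mem_range]; omega
    rw [if_congr m1 rfl rfl, if_congr m2 rfl rfl]
    by_cases h6 : n = 6 <;> simp [h6]
  -- kernel
  have hker : RingHom.ker φ.toRingHom =
      Ideal.span {(MvPowerSeries.X 1 : MvPowerSeries (Fin 2) ℂ) ^ 2 - (MvPowerSeries.X 0) ^ 3} := by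
    apply le_antisymm
    · intro F hF
      rw [RingHom.mem_ker] at hF
      have hF' : φ F = 0 := hF
      have hchain : ∀ i j : ℕ, j ≤ 1 →
          ∑ k ∈ Finset.range (i/3 + 1), c F (i - 3*k) (j + 2*k) = 0 := by
        intro i j hj
        rw [← chain_sum (c F) (2*i+3*j) i j hj rfl, ← hφ' F (2*i+3*j), hF', map_zero]
      rw [Ideal.mem_span_singleton]
      exact ⟨Q F, by rw [mul_comm]; exact (Q_mul_g F hchain).symm⟩
    · rw [Ideal.span_le, Set.singleton_subset_iff]
      exact RingHom.mem_ker.2 hg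
  have hrange : φ.range = cuspAlgebra := by
    apply le_antisymm
    · rintro f ⟨F, rfl⟩
      show PowerSeries.coeff 1 (φ F) = 0
      rw [hφ' F 1]
      apply Finset.sum_eq_zero
      intro p hp
      simp only [Finset.mem_filter, Finset.mem_product, Finset.mem_range] at hp
      omega
    · intro f hf
      have hf1 : PowerSeries.coeff 1 f = 0 := hf
      refine ⟨lift f, ?_⟩
      show φ (lift f) = f
      ext n
      rw [hφ' (lift f) n]
      by_cases hn : n = 1
      · subst hn
        rw [hf1]
        apply Finset.sum_eq_zero
        intro p hp
        simp only [Finset.mem_filter, Finset.mem_product, Finset.mem_range] at hp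
        omega
      · obtain ⟨i, j, hj, hij⟩ : ∃ i j : ℕ, j ≤ 1 ∧ 2*i + 3*j = n := by
          rcases Nat.even_or_odd n with ⟨m, hm⟩ | ⟨m, hm⟩
          · exact ⟨m, 0, by omega, by omega⟩
          · exact ⟨m - 1, 1, by omega, by omega⟩
        rw [chain_sum (c (lift f)) n i j hj hij, Finset.sum_range_succ']
        have e0 : ∀ k ∈ Finset.range (i/3), c (lift f) (i - 3*(k+1)) (j + 2*(k+1)) = 0 := by
          intro k _
          rw [c_lift]
          rw [if_neg (by omega), if_neg (by omega)]
        rw [Finset.sum_congr rfl e0, Finset.sum_const, smul_zero, zero_add, c_lift]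
        interval_cases j
        · rw [if_pos rfl]
          exact congrArg (fun m => PowerSeries.coeff m f) (by omega)
        · rw [if_neg (by omega), if_pos rfl]
          exact congrArg (fun m => PowerSeries.coeff m f) (by omega)
  refine ⟨hker, hrange, ⟨?_⟩⟩
  have e1 := Ideal.quotientKerAlgEquivOfSurjective (R₁ := ℂ) φ.rangeRestrict_surjective
  have hk2 : RingHom.ker φ.rangeRestrict =
      Ideal.span {(MvPowerSeries.X 1 : MvPowerSeries (Fin 2) ℂ) ^ 2 - (MvPowerSeries.X 0) ^ 3} := by
    rw [AlgHom.ker_rangeRestrict]; exact hker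
  exact ((Ideal.quotientEquivAlgOfEq ℂ hk2.symm).trans e1).trans
    (Subalgebra.equivOfEq _ _ hrange)
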